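/- Non-realizability of atomic types (consistency): there is no pure metaterm M of λ→m such that ⟨𝐚⟩M reduces in zero or more steps to ⋆, for any atomic type 𝐚. -/
import Mathlib

/-! The metacalculus λ→m for minimal logic: untyped λ-calculus extended with
a success constant ⋆, a guard construct (M; N), and generators ✠𝐚 / verifiers ⟨𝐚⟩
for atomic types. Terms use de Bruijn indices. -/

/-- Simple types: atomic types and arrows. -/
inductive Ty : Type
  | atom : ℕ → Ty
  | arrow : Ty → Ty → Ty

/-- Metaterms of the metacalculus λ→m (de Bruijn indices). -/
inductive Tm : Type
  | var : ℕ → Tm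
  | lam : Tm → Tm
  | app : Tm → Tm → Tm
  | star : Tm
  | guard : Tm → Tm → Tm
  | gen : ℕ → Tm
  | verif : ℕ → Tm → Tm

namespace Tm

/-- Shift de Bruijn indices ≥ c by d. -/
def shift (d c : ℕ) : Tm → Tm
  | var n => if n < c then var n else var (n + d)
  | lam M => lam (shift d (c+1) M)
  | app M N => app (shift d c M) (shift d c N)
  | star => star
  | guard M N => guard (shift d c M) (shift d c N)
  | gen a => gen a
  | verif a M => verif a (shift d c M)

/-- Capture-avoiding substitution of the variable k by N. -/
def subst (k : ℕ) (N : Tm) : Tm → Tm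
  | var n => if n = k then N else if k < n then var (n - 1) else var n
  | lam M => lam (subst (k+1) (shift 1 0 N) M)
  | app M P => app (subst k N M) (subst k N P)
  | star => star
  | guard M P => guard (subst k N M) (subst k N P)
  | gen a => gen a
  | verif a M => verif a (subst k N M)

/-- Pure metaterms: only variables, abstractions and applications. -/
def Pure : Tm → Prop
  | var _ => True
  | lam M => Pure M
  | app M N => Pure M ∧ Pure N
  | _ => False

end Tm

/-- One-step reduction of λ→m, closed under arbitrary contexts. -/
inductive Step : Tm → Tm → Prop
  | beta (M N : Tm) : Step (.app (.lam M) N) (Tm.subst 0 N M)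
  | guardStar (M : Tm) : Step (.guard .star M) M
  | verifGen (a : ℕ) : Step (.verif a (.gen a)) .star
  | lam {M M'} : Step M M' → Step (.lam M) (.lam M')
  | appL {M M'} (N) : Step M M' → Step (.app M N) (.app M' N)
  | appR {N N'} (M) : Step N N' → Step (.app M N) (.app M N')
  | guardL {M M'} (N) : Step M M' → Step (.guard M N) (.guard M' N)
  | guardR {N N'} (M) : Step N N' → Step (.guard M N) (.guard M N')
  | verif {M M'} (a) : Step M M' → Step (.verif a M) (.verif a M')

/-- Weak head reduction of λ→m: the rules closed under weak head contexts only. -/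
inductive WStep : Tm → Tm → Prop
  | beta (M N : Tm) : WStep (.app (.lam M) N) (Tm.subst 0 N M)
  | guardStar (M : Tm) : WStep (.guard .star M) M
  | verifGen (a : ℕ) : WStep (.verif a (.gen a)) .star
  | appL {M M'} (N) : WStep M M' → WStep (.app M N) (.app M' N)
  | guardL {M M'} (N) : WStep M M' → WStep (.guard M N) (.guard M' N)
  | verif {M M'} (a) : WStep M M' → WStep (.verif a M) (.verif a M')

/-- β-reduction alone, closed under arbitrary contexts. -/
inductive BStep : Tm → Tm → Prop
  | beta (M N : Tm) : BStep (.app (.lam M) N) (Tm.subst 0 N M)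
  | lam {M M'} : BStep M M' → BStep (.lam M) (.lam M')
  | appL {M M'} (N) : BStep M M' → BStep (.app M N) (.app M' N)
  | appR {N N'} (M) : BStep N N' → BStep (.app M N) (.app M N')
  | guardL {M M'} (N) : BStep M M' → BStep (.guard M N) (.guard M' N)
  | guardR {N N'} (M) : BStep N N' → BStep (.guard M N) (.guard M N')
  | verif {M M'} (a) : BStep M M' → BStep (.verif a M) (.verif a M')

mutual
/-- The generator ✠A for an arbitrary simple type A. -/
def genT : Ty → Tm
  | .atom a => .gen a
  | .arrow A B => .lam (.guard (verifT A (.var 0)) (genT B))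
/-- The verifier ⟨A⟩M for an arbitrary simple type A applied to M. -/
def verifT : Ty → Tm → Tm
  | .atom a, M => .verif a M
  | .arrow A B, M => verifT B (.app M (genT A))
end

lemma pure_shift (d c : ℕ) (M : Tm) (h : Tm.Pure M) : Tm.Pure (Tm.shift d c M) := by
  induction M generalizing c with
  | var n => simp [Tm.shift]; split <;> trivial
  | lam M ih => exact ih (c+1) h
  | app M N ihM ihN => exact ⟨ihM c h.1, ihN c h.2⟩
  | _ => simp [Tm.Pure] at h

lemma pure_subst (k : ℕ) (N M : Tm) (hN : Tm.Pure N) (hM : Tm.Pure M) :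
    Tm.Pure (Tm.subst k N M) := by
  induction M generalizing k N with
  | var n =>
    simp only [Tm.subst]
    split
    · exact hN
    · split <;> trivial
  | lam M ih => exact ih (k+1) _ (pure_shift 1 0 N hN) hM
  | app M P ihM ihP => exact ⟨ihM k N hN hM.1, ihP k N hN hM.2⟩
  | _ => simp [Tm.Pure] at hM

lemma pure_step {M M' : Tm} (h : Step M M') (hM : Tm.Pure M) : Tm.Pure M' := by
  induction h with
  | beta M N => exact pure_subst 0 N M hM.2 hM.1
  | lam _ ih => exact ih hM
  | appL N _ ih => exact ⟨ih hM.1, hM.2⟩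
  | appR M _ ih => exact ⟨hM.1, ih hM.2⟩
  | _ => simp [Tm.Pure] at hM

/-- Consistency / non-realizability of atomic types: there is no
pure metaterm M with ⟨𝐚⟩M ↠ ⋆, for any atomic type 𝐚. -/
theorem atomic_not_realizable (a : ℕ) (M : Tm) (hpure : Tm.Pure M) :
    ¬ Relation.ReflTransGen Step (Tm.verif a M) Tm.star := by
  intro h
  suffices H : ∀ X, Relation.ReflTransGen Step X Tm.star →
      ∀ M, X = Tm.verif a M → Tm.Pure M → False from H _ h M rfl hpure
  intro X h
  induction h using Relation.ReflTransGen.head_induction_on with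
  | refl => intro M hEq _; exact Tm.noConfusion hEq
  | head hstep _ ih =>
    intro M hEq hM
    subst hEq
    cases hstep with
    | verifGen => simp [Tm.Pure] at hM
    | verif _ hs => exact ih _ rfl (pure_step hs hM)
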